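/- Let A be an associative unital ℂ-algebra, h ∈ ℂ, and let x, y, z, t ∈ A satisfy the u(2)_h relations: xy − yx = hz, yz − zy = hx, zx − xz = hy, and t commutes with x, y, z. In Mat_4(A) define the constant matrices M_x = E_{12} − E_{21} − E_{34} + E_{43}, M_y = E_{13} + E_{24} − E_{31} − E_{42}, M_z = E_{14} − E_{23} + E_{32} − E_{41} (E_{ij} the 4×4 matrix units), and set X = x·I_4 + (h/2)M_x, Y = y·I_4 + (h/2)M_y, Z = z·I_4 + (h/2)M_z, T = (t + h/2)·I_4. Then these matrices satisfy the same u(2)_h relations: XY − YX = hZ, YZ − ZY = hX, ZX − XZ = hY, and T commutes with X, Y, Z. (This expresses that the matrix 𝔥̂ of quantum partial derivatives defines an algebra homomorphism U(u(2)_h) → Mat_4(U(u(2)_h)).) -/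

import Mathlib

open Matrix Complex

section Aux
variable {A : Type*} [Ring A] [Algebra ℂ A]

private lemma std_mul_smul_one (i j : Fin 4) (a : A) :
    Matrix.single i j (1:A) * (a • 1) = a • Matrix.single i j (1:A) := by
  rw [Matrix.smul_one_eq_diagonal]
  ext p q
  simp only [Matrix.mul_diagonal, Matrix.smul_apply, Matrix.single, Matrix.of_apply,
    smul_eq_mul]
  split <;> simp

private lemma std_mul (i j k l : Fin 4) :
    Matrix.single i j (1:A) * Matrix.single k l (1:A)
      = if j = k then Matrix.single i l (1:A) else 0 := by
  by_cases hjk : j = k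
  · subst hjk
    rw [if_pos rfl, Matrix.single_mul_single_same, one_mul]
  · rw [if_neg hjk, Matrix.single_mul_single_of_ne (h := hjk)]

private lemma comm_aux (c : ℂ) (a b w : A)
    (Ma Mb Mw : Matrix (Fin 4) (Fin 4) A)
    (hab : a * b - b * a = (2 * c) • w)
    (hMa : ∀ r : A, Ma * (r • 1) = r • Ma)
    (hMb : ∀ r : A, Mb * (r • 1) = r • Mb)
    (hprod : Ma * Mb = Mw) (hprod' : Mb * Ma = -Mw) :
    (a • 1 + c • Ma) * (b • 1 + c • Mb) - (b • 1 + c • Mb) * (a • 1 + c • Ma)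
      = (2 * c) • (w • (1 : Matrix (Fin 4) (Fin 4) A) + c • Mw) := by
  have key1 : (a • (1 : Matrix (Fin 4) (Fin 4) A) + c • Ma) * (b • 1 + c • Mb)
      = (a * b) • 1 + c • (a • Mb) + c • (b • Ma) + (c * c) • Mw := by
    simp only [add_mul, mul_add, Matrix.smul_mul, Matrix.mul_smul, one_mul, hMa, hprod,
      smul_smul, smul_comm a c]
    abel
  have key2 : (b • (1 : Matrix (Fin 4) (Fin 4) A) + c • Mb) * (a • 1 + c • Ma)
      = (b * a) • 1 + c • (b • Ma) + c • (a • Mb) + (c * c) • (-Mw) := by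
    simp only [add_mul, mul_add, Matrix.smul_mul, Matrix.mul_smul, one_mul, hMb, hprod',
      smul_smul, smul_comm b c]
    abel
  have h1 : (a * b) • (1 : Matrix (Fin 4) (Fin 4) A) - (b * a) • 1 = (2 * c) • (w • 1) := by
    rw [← sub_smul, hab, smul_assoc]
  have h2 : (c * c) • Mw - (c * c) • (-Mw) = (2 * c) • (c • Mw) := by
    rw [smul_neg, sub_neg_eq_add, smul_smul, ← add_smul]
    ring_nf
  rw [key1, key2, smul_add, ← h1, ← h2]
  abel
end Aux

theorem u2h_matrix_representation
    {A : Type*} [Ring A] [Algebra ℂ A] (h : ℂ) (x y z t : A)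
    (hxy : x * y - y * x = h • z)
    (hyz : y * z - z * y = h • x)
    (hzx : z * x - x * z = h • y)
    (htx : t * x = x * t) (hty : t * y = y * t) (htz : t * z = z * t)
    (Mx My Mz : Matrix (Fin 4) (Fin 4) A)
    (hMx : Mx = Matrix.single 0 1 (1 : A) - Matrix.single 1 0 (1 : A)
      - Matrix.single 2 3 (1 : A) + Matrix.single 3 2 (1 : A))
    (hMy : My = Matrix.single 0 2 (1 : A) + Matrix.single 1 3 (1 : A)
      - Matrix.single 2 0 (1 : A) - Matrix.single 3 1 (1 : A))
    (hMz : Mz = Matrix.single 0 3 (1 : A) - Matrix.single 1 2 (1 : A)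
      + Matrix.single 2 1 (1 : A) - Matrix.single 3 0 (1 : A))
    (X Y Z T : Matrix (Fin 4) (Fin 4) A)
    (hX : X = x • (1 : Matrix (Fin 4) (Fin 4) A) + (h / 2) • Mx)
    (hY : Y = y • (1 : Matrix (Fin 4) (Fin 4) A) + (h / 2) • My)
    (hZ : Z = z • (1 : Matrix (Fin 4) (Fin 4) A) + (h / 2) • Mz)
    (hT : T = (t + (h / 2) • (1 : A)) • (1 : Matrix (Fin 4) (Fin 4) A)) :
    X * Y - Y * X = h • Z ∧ Y * Z - Z * Y = h • X ∧ Z * X - X * Z = h • Y ∧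
      T * X = X * T ∧ T * Y = Y * T ∧ T * Z = Z * T := by
  have h2 : (2 : ℂ) * (h / 2) = h := by ring
  -- centrality of the constant matrices
  have cx : ∀ r : A, Mx * (r • 1) = r • Mx := by
    intro r
    rw [hMx]
    simp only [sub_mul, add_mul, std_mul_smul_one, smul_sub, smul_add]
  have cy : ∀ r : A, My * (r • 1) = r • My := by
    intro r
    rw [hMy]
    simp only [sub_mul, add_mul, std_mul_smul_one, smul_sub, smul_add]
  have cz : ∀ r : A, Mz * (r • 1) = r • Mz := by
    intro r
    rw [hMz]
    simp only [sub_mul, add_mul, std_mul_smul_one, smul_sub, smul_add]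
  -- quaternion-like products
  have pxy : Mx * My = Mz := by
    rw [hMx, hMy, hMz]
    simp (config := { decide := true }) only [sub_mul, add_mul, mul_sub, mul_add, std_mul,
      if_true, if_false, reduceIte]
    abel
  have pyx : My * Mx = -Mz := by
    rw [hMx, hMy, hMz]
    simp (config := { decide := true }) only [sub_mul, add_mul, mul_sub, mul_add, std_mul,
      if_true, if_false, reduceIte]
    abel
  have pyz : My * Mz = Mx := by
    rw [hMx, hMy, hMz]
    simp (config := { decide := true }) only [sub_mul, add_mul, mul_sub, mul_add, std_mul,
      if_true, if_false, reduceIte]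
    abel
  have pzy : Mz * My = -Mx := by
    rw [hMx, hMy, hMz]
    simp (config := { decide := true }) only [sub_mul, add_mul, mul_sub, mul_add, std_mul,
      if_true, if_false, reduceIte]
    abel
  have pzx : Mz * Mx = My := by
    rw [hMx, hMy, hMz]
    simp (config := { decide := true }) only [sub_mul, add_mul, mul_sub, mul_add, std_mul,
      if_true, if_false, reduceIte]
    abel
  have pxz : Mx * Mz = -My := by
    rw [hMx, hMy, hMz]
    simp (config := { decide := true }) only [sub_mul, add_mul, mul_sub, mul_add, std_mul,
      if_true, if_false, reduceIte]
    abel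
  -- commutation of the "time" scalar with the generators
  have s := t + (h / 2) • (1 : A)
  have tcomm : ∀ (a : A), t * a = a * t →
      (t + (h / 2) • (1 : A)) * a = a * (t + (h / 2) • (1 : A)) := by
    intro a ha
    rw [add_mul, mul_add, ha, smul_mul_assoc, mul_smul_comm, one_mul, mul_one]
  -- T commutes with each of X, Y, Z
  have Tcomm : ∀ (a : A) (M N : Matrix (Fin 4) (Fin 4) A),
      (∀ r : A, M * (r • 1) = r • M) →
      (t + (h / 2) • (1 : A)) * a = a * (t + (h / 2) • (1 : A)) →
      N = a • 1 + (h / 2) • M → T * N = N * T := by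
    intro a M N hM ha hN
    have osm : ∀ r q : A, (r • (1 : Matrix (Fin 4) (Fin 4) A)) * (q • 1) = (r * q) • 1 := by
      intro r q
      rw [Matrix.smul_mul, one_mul, smul_smul]
    rw [hN, hT, mul_add, add_mul, osm, osm, ha, Matrix.smul_mul, one_mul,
      smul_comm, Matrix.smul_mul, hM]
  refine ⟨?_, ?_, ?_, ?_, ?_, ?_⟩
  · rw [hX, hY, comm_aux (h/2) x y z Mx My Mz (by rw [h2]; exact hxy) cx cy pxy pyx, h2, hZ]
  · rw [hY, hZ, comm_aux (h/2) y z x My Mz Mx (by rw [h2]; exact hyz) cy cz pyz pzy, h2, hX]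
  · rw [hZ, hX, comm_aux (h/2) z x y Mz Mx My (by rw [h2]; exact hzx) cz cx pzx pxz, h2, hY]
  · exact Tcomm x Mx X cx (tcomm x htx) hX
  · exact Tcomm y My Y cy (tcomm y hty) hY
  · exact Tcomm z Mz Z cz (tcomm z htz) hZ
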